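/- For all complex numbers x, z and every natural number n, the sum over k from 0 to n of C(x−k, n−k)·z^k equals the sum over k from 0 to n of C(x+1, n−k)·(z−1)^k. -/

import Mathlib

/-- The generalized binomial coefficient `C(x, k) = x(x-1)⋯(x-k+1)/k!` for `x : ℂ`. -/
noncomputable def genBinom (x : ℂ) (k : ℕ) : ℂ := (∏ i ∈ Finset.range k, (x - i)) / (Nat.factorial k)

lemma desc_smeval_prod (x : ℂ) (k : ℕ) :
    (descPochhammer ℤ k).smeval x = ∏ i ∈ Finset.range k, (x - i) := by
  induction k with
  | zero => simp [descPochhammer_zero, Polynomial.smeval_one]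
  | succ k ih =>
    rw [descPochhammer_succ_right, Polynomial.smeval_mul, ih, Finset.prod_range_succ,
      Polynomial.smeval_sub, Polynomial.smeval_X, Polynomial.smeval_natCast]
    simp

lemma genBinom_eq (x : ℂ) (k : ℕ) : genBinom x k = Ring.choose x k := by
  have h := Ring.descPochhammer_eq_factorial_smul_choose x k
  rw [desc_smeval_prod] at h
  rw [genBinom, h, nsmul_eq_mul]
  field_simp [Nat.factorial_ne_zero]

lemma choose_reflect (a : ℂ) (k : ℕ) :
    Ring.choose a k = (-1) ^ k * Ring.choose ((k : ℂ) - a - 1) k := by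
  rw [← genBinom_eq, ← genBinom_eq, genBinom, genBinom]
  have hprod : ∏ i ∈ Finset.range k, ((k : ℂ) - a - 1 - i)
      = (-1)^k * ∏ i ∈ Finset.range k, (a - i) := by
    calc ∏ i ∈ Finset.range k, ((k : ℂ) - a - 1 - i)
        = ∏ i ∈ Finset.range k, (-1) * (a - ((k - 1 - i : ℕ) : ℂ)) := by
          refine Finset.prod_congr rfl fun i hi => ?_
          have hik : i < k := Finset.mem_range.mp hi
          rw [Nat.cast_sub (by omega), Nat.cast_sub (by omega), Nat.cast_one]
          ring
      _ = (-1)^k * ∏ i ∈ Finset.range k, (a - ((k - 1 - i : ℕ) : ℂ)) := by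
          rw [Finset.prod_mul_distrib, Finset.prod_const, Finset.card_range]
      _ = (-1)^k * ∏ i ∈ Finset.range k, (a - i) := by
          rw [Finset.prod_range_reflect (fun i => a - (i : ℂ)) k]
  rw [hprod, mul_div_assoc, ← mul_assoc, ← mul_pow]
  simp

lemma nat_choose_as_ring (j m : ℕ) :
    (((j + m).choose j : ℕ) : ℂ) = (-1) ^ m * Ring.choose (-(j : ℂ) - 1) m := by
  rw [choose_reflect (-(j:ℂ) - 1) m]
  have h1 : (m : ℂ) - (-(j:ℂ) - 1) - 1 = ((j + m : ℕ) : ℂ) := by push_cast; ring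
  rw [← mul_assoc, ← mul_pow, h1, Ring.choose_natCast]
  have h2 : (j + m).choose m = (j + m).choose j := by
    rw [← Nat.choose_symm (Nat.le_add_right j m)]; simp
  simp [h2]

lemma key_vandermonde (y : ℂ) (N j : ℕ) :
    ∑ m ∈ Finset.range (N + 1), Ring.choose (y - m) (N - m) * (((j + m).choose j : ℕ) : ℂ)
      = Ring.choose (y + j + 1) N := by
  have step1 : ∀ m ∈ Finset.range (N + 1),
      Ring.choose (y - m) (N - m) * (((j + m).choose j : ℕ) : ℂ)
        = (-1) ^ N * (Ring.choose (-(j:ℂ) - 1) m * Ring.choose ((N : ℂ) - y - 1) (N - m)) := by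
    intro m hm
    have hmN : m ≤ N := by simpa using Nat.lt_succ_iff.mp (Finset.mem_range.mp hm)
    rw [nat_choose_as_ring, choose_reflect (y - m) (N - m)]
    have hc : ((N - m : ℕ) : ℂ) - (y - m) - 1 = (N : ℂ) - y - 1 := by
      rw [Nat.cast_sub hmN]; ring
    rw [hc]
    have hsign : ((-1 : ℂ)) ^ (N - m) * (-1) ^ m = (-1) ^ N := by
      rw [← pow_add]; congr 1; omega
    calc (-1:ℂ) ^ (N - m) * Ring.choose ((N:ℂ) - y - 1) (N - m) * ((-1) ^ m * Ring.choose (-(j:ℂ) - 1) m)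
        = ((-1:ℂ) ^ (N - m) * (-1) ^ m) * (Ring.choose (-(j:ℂ) - 1) m * Ring.choose ((N:ℂ) - y - 1) (N - m)) := by ring
      _ = _ := by rw [hsign]
  rw [Finset.sum_congr rfl step1, ← Finset.mul_sum]
  have hvdm := Ring.add_choose_eq (r := -(j:ℂ) - 1) (s := (N : ℂ) - y - 1) N (Commute.all _ _)
  rw [Finset.Nat.sum_antidiagonal_eq_sum_range_succ_mk] at hvdm
  simp only at hvdm
  rw [← hvdm]
  have h3 : -(j:ℂ) - 1 + ((N : ℂ) - y - 1) = (N:ℂ) - (y + j + 1) - 1 := by ring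
  rw [h3, ← choose_reflect]

theorem binom_shift_identity (x z : ℂ) (n : ℕ) :
    ∑ k ∈ Finset.range (n + 1), genBinom (x - k) (n - k) * z ^ k =
      ∑ k ∈ Finset.range (n + 1), genBinom (x + 1) (n - k) * (z - 1) ^ k := by
  simp only [genBinom_eq]
  have hz : ∀ k : ℕ, z ^ k = ∑ j ∈ Finset.range (k + 1), (z - 1) ^ j * (k.choose j : ℂ) := by
    intro k
    have := add_pow (z - 1) 1 k
    simpa [sub_add_cancel] using this
  calc ∑ k ∈ Finset.range (n + 1), Ring.choose (x - k) (n - k) * z ^ k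
      = ∑ k ∈ Finset.range (n + 1), ∑ j ∈ Finset.range (k + 1),
          Ring.choose (x - k) (n - k) * ((z - 1) ^ j * (k.choose j : ℂ)) := by
        refine Finset.sum_congr rfl fun k _ => ?_
        rw [hz k, Finset.mul_sum]
    _ = ∑ j ∈ Finset.range (n + 1), ∑ k ∈ Finset.Ico j (n + 1),
          Ring.choose (x - k) (n - k) * ((z - 1) ^ j * (k.choose j : ℂ)) := by
        refine Finset.sum_comm' ?_
        intro k j
        simp only [Finset.mem_range, Finset.mem_Ico]
        omega
    _ = ∑ j ∈ Finset.range (n + 1), (z - 1) ^ j * Ring.choose (x + 1) (n - j) := by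
        refine Finset.sum_congr rfl fun j hj => ?_
        have hjn : j ≤ n := Nat.lt_succ_iff.mp (Finset.mem_range.mp hj)
        rw [Finset.sum_Ico_eq_sum_range]
        have hcnt : n + 1 - j = (n - j) + 1 := by omega
        rw [hcnt]
        have hterm : ∀ m, Ring.choose (x - (j + m : ℕ)) (n - (j + m)) * ((z - 1) ^ j * ((j + m).choose j : ℂ))
            = (z - 1) ^ j * (Ring.choose ((x - j) - m) ((n - j) - m) * (((j + m).choose j : ℕ) : ℂ)) := by
          intro m
          have h1 : x - ((j + m : ℕ) : ℂ) = (x - j) - m := by push_cast; ring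
          have h2 : n - (j + m) = (n - j) - m := by omega
          rw [h1, h2]; ring
        rw [Finset.sum_congr rfl fun m _ => hterm m, ← Finset.mul_sum, key_vandermonde (x - j) (n - j) j]
        have : x - (j : ℂ) + j + 1 = x + 1 := by ring
        rw [this]
    _ = ∑ k ∈ Finset.range (n + 1), Ring.choose (x + 1) (n - k) * (z - 1) ^ k := by
        refine Finset.sum_congr rfl fun k _ => ?_
        ring
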